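/- The Cayley transform z ↦ i(1 + z)(1 - z)⁻¹ maps the bounded domain D₀ = {z symmetric n×n complex : 1 - z z̄ positive definite} bijectively onto the Siegel upper half space S₀ = {Z symmetric : Im Z positive definite}, with inverse Z ↦ (Z - i)(Z + i)⁻¹. -/

import Mathlib

open Matrix
open scoped ComplexOrder

/-- The Siegel upper half space: symmetric complex matrices with positive definite
imaginary part. -/
def SiegelSet (n : ℕ) : Set (Matrix (Fin n) (Fin n) ℂ) :=
  {Z | Zᵀ = Z ∧ (Matrix.of fun i j => (Z i j).im).PosDef}

/-- The bounded domain `D₀`: symmetric complex matrices `z` with `1 - z z̄` positive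
definite. -/
def DiskSet (n : ℕ) : Set (Matrix (Fin n) (Fin n) ℂ) :=
  {z | zᵀ = z ∧ (1 - z * z.map (starRingEnd ℂ)).PosDef}

section Helpers

variable {n : ℕ}

private lemma left_cancel {A X Y : Matrix (Fin n) (Fin n) ℂ} (hA : IsUnit A)
    (h : A * X = A * Y) : X = Y := by
  have hd := (Matrix.isUnit_iff_isUnit_det A).mp hA
  have h2 := congrArg (fun M => A⁻¹ * M) h
  simpa [← Matrix.mul_assoc, Matrix.nonsing_inv_mul A hd] using h2

private lemma right_cancel {A X Y : Matrix (Fin n) (Fin n) ℂ} (hA : IsUnit A)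
    (h : X * A = Y * A) : X = Y := by
  have hd := (Matrix.isUnit_iff_isUnit_det A).mp hA
  have h2 := congrArg (fun M => M * A⁻¹) h
  simpa [Matrix.mul_assoc, Matrix.mul_nonsing_inv A hd] using h2

private lemma inv_comm' {A B : Matrix (Fin n) (Fin n) ℂ} (hA : IsUnit A)
    (h : A * B = B * A) : A⁻¹ * B = B * A⁻¹ := by
  have hd := (Matrix.isUnit_iff_isUnit_det A).mp hA
  apply left_cancel hA
  rw [← Matrix.mul_assoc, Matrix.mul_nonsing_inv A hd, Matrix.one_mul, ← Matrix.mul_assoc, h,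
    Matrix.mul_assoc, Matrix.mul_nonsing_inv A hd, Matrix.mul_one]

private lemma isUnit_conjT {A : Matrix (Fin n) (Fin n) ℂ} (hA : IsUnit A) : IsUnit Aᴴ := by
  rw [Matrix.isUnit_iff_isUnit_det, Matrix.det_conjTranspose]
  exact ((Matrix.isUnit_iff_isUnit_det A).mp hA).star

/-- If `A` is positive definite and `B` invertible then `Bᴴ A B` is positive definite. -/
private lemma posdef_conj {A B : Matrix (Fin n) (Fin n) ℂ} (hA : A.PosDef) (hB : IsUnit B) :
    (Bᴴ * A * B).PosDef := by
  have hd := (Matrix.isUnit_iff_isUnit_det B).mp hB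
  refine Matrix.PosDef.of_dotProduct_mulVec_pos (Matrix.isHermitian_conjTranspose_mul_mul B hA.1) (fun x hx => ?_)
  have hBx : B *ᵥ x ≠ 0 := by
    intro h0
    apply hx
    have : B⁻¹ *ᵥ (B *ᵥ x) = x := by
      rw [Matrix.mulVec_mulVec, Matrix.nonsing_inv_mul B hd, Matrix.one_mulVec]
    rw [← this, h0, Matrix.mulVec_zero]
  simpa only [star_mulVec, Matrix.dotProduct_mulVec, Matrix.vecMul_vecMul] using
    hA.dotProduct_mulVec_pos hBx

private lemma posdef_mul_conj {A B : Matrix (Fin n) (Fin n) ℂ} (hA : A.PosDef) (hB : IsUnit B) :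
    (B * A * Bᴴ).PosDef := by
  have := posdef_conj hA (isUnit_conjT hB)
  simpa using this

private lemma map_dot (M : Matrix (Fin n) (Fin n) ℝ) (u v : Fin n → ℝ) :
    ((Complex.ofRealHom ∘ u) ⬝ᵥ (M.map Complex.ofRealHom *ᵥ (Complex.ofRealHom ∘ v)) : ℂ)
      = Complex.ofRealHom (u ⬝ᵥ (M *ᵥ v)) := by
  have h1 : M.map Complex.ofRealHom *ᵥ (Complex.ofRealHom ∘ v)
      = Complex.ofRealHom ∘ (M *ᵥ v) := by
    funext i
    exact (RingHom.map_mulVec Complex.ofRealHom M v i).symm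
  rw [h1, ← RingHom.map_dotProduct]

private lemma dot_symm (M : Matrix (Fin n) (Fin n) ℝ) (hM : Mᵀ = M) (u v : Fin n → ℝ) :
    u ⬝ᵥ (M *ᵥ v) = v ⬝ᵥ (M *ᵥ u) := by
  rw [Matrix.dotProduct_mulVec]
  conv_lhs => rw [← hM]
  rw [Matrix.vecMul_transpose, dotProduct_comm]

/-- Forward bridge: a real positive definite matrix stays positive definite over `ℂ`. -/
private lemma map_posdef {M : Matrix (Fin n) (Fin n) ℝ} (hM : M.PosDef) :
    (M.map Complex.ofRealHom).PosDef := by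
  have hsym : Mᵀ = M := by
    ext i j
    simpa using hM.1.apply i j
  refine Matrix.PosDef.of_dotProduct_mulVec_pos ?_ ?_
  · ext i j
    simp only [Matrix.conjTranspose_apply, Matrix.map_apply, Complex.ofRealHom_eq_coe,
      Complex.star_def, Complex.conj_ofReal]
    exact_mod_cast (congrFun (congrFun hsym i) j : Mᵀ i j = M i j)
  · intro x hx
    set a : Fin n → ℝ := fun i => (x i).re with ha
    set b : Fin n → ℝ := fun i => (x i).im with hb
    have hxab : x = (Complex.ofRealHom ∘ a) + Complex.I • (Complex.ofRealHom ∘ b) := by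
      funext i
      simp [a, b, Complex.ext_iff]
    have hstar : star x = (Complex.ofRealHom ∘ a) - Complex.I • (Complex.ofRealHom ∘ b) := by
      funext i
      simp [a, b, Complex.ext_iff]
    have hab : a ≠ 0 ∨ b ≠ 0 := by
      by_contra hcon
      push_neg at hcon
      apply hx
      rw [hxab, hcon.1, hcon.2]
      funext i
      simp
    have key : star x ⬝ᵥ (M.map Complex.ofRealHom *ᵥ x)
        = Complex.ofRealHom (a ⬝ᵥ (M *ᵥ a) + b ⬝ᵥ (M *ᵥ b)) := by
      conv_lhs => rw [hstar, hxab]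
      rw [Matrix.mulVec_add, Matrix.mulVec_smul, sub_dotProduct,
        dotProduct_add, dotProduct_add, smul_dotProduct,
        dotProduct_smul, dotProduct_smul, smul_dotProduct,
        map_dot, map_dot, map_dot, map_dot, dot_symm M hsym b a]
      simp only [smul_eq_mul, map_add, Complex.ofRealHom_eq_coe]
      push_cast
      linear_combination (-(Complex.ofReal (b ⬝ᵥ (M *ᵥ b)) : ℂ)) * Complex.I_sq
    rw [key]
    have hpos : 0 < a ⬝ᵥ (M *ᵥ a) + b ⬝ᵥ (M *ᵥ b) := by
      have hsd : ∀ u : Fin n → ℝ, 0 ≤ u ⬝ᵥ (M *ᵥ u) := by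
        intro u
        simpa using hM.posSemidef.dotProduct_mulVec_nonneg u
      have hd : ∀ u : Fin n → ℝ, u ≠ 0 → 0 < u ⬝ᵥ (M *ᵥ u) := by
        intro u hu
        simpa using hM.dotProduct_mulVec_pos hu
      rcases hab with h | h
      · exact add_pos_of_pos_of_nonneg (hd a h) (hsd b)
      · exact add_pos_of_nonneg_of_pos (hsd a) (hd b h)
    simp only [Complex.ofRealHom_eq_coe]
    exact Complex.zero_lt_real.mpr hpos

/-- Reverse bridge. -/
private lemma posdef_of_map {M : Matrix (Fin n) (Fin n) ℝ}
    (h : (M.map Complex.ofRealHom).PosDef) : M.PosDef := by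
  refine Matrix.PosDef.of_dotProduct_mulVec_pos ?_ ?_
  · ext i j
    have h2 := congrFun (congrFun h.1 i) j
    simp only [Matrix.conjTranspose_apply, Matrix.map_apply, Complex.ofRealHom_eq_coe,
      Complex.star_def, Complex.conj_ofReal] at h2
    simpa [Matrix.conjTranspose_apply] using Complex.ofReal_injective h2
  · intro x hx
    have hx' : (Complex.ofRealHom ∘ x : Fin n → ℂ) ≠ 0 := by
      intro h0
      apply hx
      funext i
      have := congrFun h0 i
      simpa using this
    have h2 := h.dotProduct_mulVec_pos hx'
    have hstar : star (Complex.ofRealHom ∘ x : Fin n → ℂ) = Complex.ofRealHom ∘ x := by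
      funext i
      simp
    rw [hstar, map_dot, Complex.ofRealHom_eq_coe] at h2
    exact Complex.zero_lt_real.mp h2

/-- Symmetric matrices: entrywise conjugate equals conjugate transpose. -/
private lemma map_conj_eq_conjT {M : Matrix (Fin n) (Fin n) ℂ} (hM : Mᵀ = M) :
    M.map (starRingEnd ℂ) = Mᴴ := by
  ext i j
  have h2 : M j i = M i j := congrFun (congrFun hM i) j
  simp [Matrix.conjTranspose_apply, h2]

/-- The imaginary-part matrix, complexified, in terms of `M - Mᴴ`. -/
private lemma im_map_eq {M : Matrix (Fin n) (Fin n) ℂ} (hM : Mᵀ = M) :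
    (Matrix.of fun i j => (M i j).im).map Complex.ofRealHom
      = ((2 * Complex.I)⁻¹) • (M - Mᴴ) := by
  ext i j
  have hji : M j i = M i j := congrFun (congrFun hM i) j
  simp only [Matrix.map_apply, Matrix.of_apply, Matrix.smul_apply, Matrix.sub_apply,
    Matrix.conjTranspose_apply, hji, Complex.ofRealHom_eq_coe, smul_eq_mul, Complex.star_def]
  rw [Complex.im_eq_sub_conj]
  field_simp

private lemma sub_conjT_eq {M : Matrix (Fin n) (Fin n) ℂ} (hM : Mᵀ = M) :
    M - Mᴴ = (2 * Complex.I) • ((Matrix.of fun i j => (M i j).im).map Complex.ofRealHom) := by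
  rw [im_map_eq hM, smul_smul]
  rw [mul_inv_cancel₀ (by simp [Complex.I_ne_zero] : (2 : ℂ) * Complex.I ≠ 0), one_smul]

/-- `1 - z` is invertible for `z` in the disk. -/
private lemma disk_isUnit {z : Matrix (Fin n) (Fin n) ℂ} (hz : z ∈ DiskSet n) :
    IsUnit (1 - z) := by
  obtain ⟨hsym, hpd⟩ := hz
  by_contra hu
  rw [Matrix.isUnit_iff_isUnit_det, isUnit_iff_ne_zero, not_ne_iff] at hu
  obtain ⟨x, hx0, hxe⟩ := Matrix.exists_mulVec_eq_zero_iff.mpr hu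
  have hzx : z *ᵥ x = x := by
    have := hxe
    rw [Matrix.sub_mulVec, Matrix.one_mulVec, sub_eq_zero] at this
    exact this.symm
  set y : Fin n → ℂ := star x with hy
  have hy0 : y ≠ 0 := star_ne_zero.mpr hx0
  have hq := hpd.dotProduct_mulVec_pos hy0
  have hconj : z.map (starRingEnd ℂ) *ᵥ y = y := by
    funext i
    have := congrFun hzx i
    simp only [Matrix.mulVec, dotProduct] at this ⊢
    simp only [hy, Pi.star_apply, Matrix.map_apply]
    calc ∑ j, (starRingEnd ℂ) (z i j) * star (x j)
        = star (∑ j, z i j * x j) := by simp [star_sum]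
      _ = star (x i) := by rw [this]
  have hzy : star y ⬝ᵥ (z *ᵥ y) = star y ⬝ᵥ y := by
    rw [Matrix.dotProduct_mulVec]
    have hsv : star y ᵥ* z = star y := by
      have h3 : star y ᵥ* zᵀ = z *ᵥ star y := Matrix.vecMul_transpose z (star y)
      rw [hsym] at h3
      rw [h3, hy, star_star, hzx]
    rw [hsv]
  have hzero : star y ⬝ᵥ ((1 - z * z.map (starRingEnd ℂ)) *ᵥ y) = 0 := by
    rw [Matrix.sub_mulVec, Matrix.one_mulVec, dotProduct_sub,
      ← Matrix.mulVec_mulVec, hconj, hzy, sub_self]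
  rw [hzero] at hq
  exact lt_irrefl 0 hq

/-- `Z + iI` is invertible for `Z` in the Siegel space. -/
private lemma siegel_isUnit {Z : Matrix (Fin n) (Fin n) ℂ} (hZ : Z ∈ SiegelSet n) :
    IsUnit (Z + Complex.I • (1 : Matrix (Fin n) (Fin n) ℂ)) := by
  obtain ⟨hsym, hpd⟩ := hZ
  by_contra hu
  rw [Matrix.isUnit_iff_isUnit_det, isUnit_iff_ne_zero, not_ne_iff] at hu
  obtain ⟨x, hx0, hxe⟩ := Matrix.exists_mulVec_eq_zero_iff.mpr hu
  have hZx : Z *ᵥ x = -(Complex.I • x) := by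
    rw [Matrix.add_mulVec, Matrix.smul_mulVec, Matrix.one_mulVec] at hxe
    exact eq_neg_of_add_eq_zero_left hxe
  set Yc := (Matrix.of fun i j => (Z i j).im).map Complex.ofRealHom with hYc
  have hYpd : Yc.PosDef := map_posdef hpd
  have hdiff : Z - Zᴴ = (2 * Complex.I) • Yc := sub_conjT_eq hsym
  have hs : (0:ℂ) < star x ⬝ᵥ x := by
    have := (Matrix.PosDef.one (n := Fin n) (R := ℂ)).dotProduct_mulVec_pos hx0
    simpa [Matrix.one_mulVec] using this
  have hp : (0:ℂ) < star x ⬝ᵥ (Yc *ᵥ x) := hYpd.dotProduct_mulVec_pos hx0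
  have hc : star x ⬝ᵥ (Z *ᵥ x) = -(Complex.I * (star x ⬝ᵥ x)) := by
    rw [hZx, dotProduct_neg, dotProduct_smul, smul_eq_mul]
  have hss : star (star x ⬝ᵥ x) = star x ⬝ᵥ x := by
    conv_rhs => rw [Matrix.star_dotProduct (v := x) (w := x)]
  have hcs : star x ⬝ᵥ (Zᴴ *ᵥ x) = star (star x ⬝ᵥ (Z *ᵥ x)) := by
    rw [Matrix.dotProduct_mulVec, ← Matrix.star_mulVec, Matrix.star_dotProduct]
  have hkey : star x ⬝ᵥ ((Z - Zᴴ) *ᵥ x)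
      = -(2 * Complex.I * (star x ⬝ᵥ x)) := by
    rw [Matrix.sub_mulVec, dotProduct_sub, hcs, hc, star_neg, star_mul', hss,
      Complex.star_def, Complex.conj_I]
    ring
  have hkey2 : star x ⬝ᵥ ((Z - Zᴴ) *ᵥ x)
      = 2 * Complex.I * (star x ⬝ᵥ (Yc *ᵥ x)) := by
    rw [hdiff, Matrix.smul_mulVec, dotProduct_smul, smul_eq_mul]
  have h2I : (2 : ℂ) * Complex.I ≠ 0 := by simp [Complex.I_ne_zero]
  have hps : star x ⬝ᵥ (Yc *ᵥ x) = -(star x ⬝ᵥ x) := by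
    apply mul_left_cancel₀ h2I
    rw [← hkey2, hkey]
    ring
  have : (0:ℂ) < star x ⬝ᵥ (Yc *ᵥ x) + star x ⬝ᵥ x := add_pos hp hs
  rw [hps, neg_add_cancel] at this
  exact lt_irrefl 0 this

private lemma isUnit_of_mul_eq_one' {A B : Matrix (Fin n) (Fin n) ℂ} (h : A * B = 1) :
    IsUnit A := by
  rw [Matrix.isUnit_iff_isUnit_det]
  exact IsUnit.of_mul_eq_one B.det (by rw [← Matrix.det_mul, h, Matrix.det_one])

end Helpers

/-- The Cayley transform `z ↦ i(1 + z)(1 - z)⁻¹` maps `D₀` bijectively onto the Siegel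
upper half space `S₀`, with inverse `Z ↦ (Z - i)(Z + i)⁻¹`. -/
theorem stmt7 (n : ℕ) :
    (∀ z ∈ DiskSet n, Complex.I • ((1 + z) * (1 - z)⁻¹) ∈ SiegelSet n) ∧
    (∀ Z ∈ SiegelSet n,
      (Z - Complex.I • (1 : Matrix (Fin n) (Fin n) ℂ)) *
        (Z + Complex.I • (1 : Matrix (Fin n) (Fin n) ℂ))⁻¹ ∈ DiskSet n) ∧
    (∀ z ∈ DiskSet n,
      (Complex.I • ((1 + z) * (1 - z)⁻¹) - Complex.I • (1 : Matrix (Fin n) (Fin n) ℂ)) *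
        (Complex.I • ((1 + z) * (1 - z)⁻¹) + Complex.I • (1 : Matrix (Fin n) (Fin n) ℂ))⁻¹
        = z) ∧
    (∀ Z ∈ SiegelSet n,
      Complex.I • ((1 + (Z - Complex.I • (1 : Matrix (Fin n) (Fin n) ℂ)) *
            (Z + Complex.I • (1 : Matrix (Fin n) (Fin n) ℂ))⁻¹) *
          (1 - (Z - Complex.I • (1 : Matrix (Fin n) (Fin n) ℂ)) *
            (Z + Complex.I • (1 : Matrix (Fin n) (Fin n) ℂ))⁻¹)⁻¹) = Z) := by
  have h2I : (2 : ℂ) * Complex.I ≠ 0 := by simp [Complex.I_ne_zero]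
  have hI2I : Complex.I * (2 * Complex.I)⁻¹ = 2⁻¹ := by
    field_simp
  refine ⟨?_, ?_, ?_, ?_⟩
  · -- (a) forward map lands in Siegel space
    intro z hz
    obtain ⟨hsym, hpd⟩ := hz
    have hu : IsUnit (1 - z) := disk_isUnit ⟨hsym, hpd⟩
    have hd : IsUnit (1 - z).det := (Matrix.isUnit_iff_isUnit_det _).mp hu
    set u := (1 - z)⁻¹ with hu'
    have h1 : (1 - z) * u = 1 := Matrix.mul_nonsing_inv _ hd
    have h2 : u * (1 - z) = 1 := Matrix.nonsing_inv_mul _ hd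
    have huu : IsUnit u := Matrix.isUnit_nonsing_inv_iff.mpr hu
    have hcomm : u * (1 + z) = (1 + z) * u := inv_comm' hu (by noncomm_ring)
    have hut : uᵀ = u := by
      rw [hu', Matrix.transpose_nonsing_inv, Matrix.transpose_sub, Matrix.transpose_one, hsym]
    have hWt : (Complex.I • ((1 + z) * u))ᵀ = Complex.I • ((1 + z) * u) := by
      rw [Matrix.transpose_smul, Matrix.transpose_mul, hut, Matrix.transpose_add,
        Matrix.transpose_one, hsym, hcomm]
    refine ⟨hWt, ?_⟩
    apply posdef_of_map
    rw [im_map_eq hWt]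
    -- positive definiteness of the imaginary part
    have hzH : z.map (starRingEnd ℂ) = zᴴ := map_conj_eq_conjT hsym
    have hzHt : (zᴴ)ᵀ = zᴴ := by
      ext i j
      have hij : z i j = z j i := by
        have h3 := congrFun (congrFun hsym j) i
        simpa using h3
      simp [Matrix.conjTranspose_apply, hij]
    have hA : (1 - zᴴ * z).PosDef := by
      rw [hzH] at hpd
      have ht := hpd.transpose
      have : (1 - z * zᴴ)ᵀ = 1 - zᴴ * z := by
        rw [Matrix.transpose_sub, Matrix.transpose_one, Matrix.transpose_mul, hzHt, hsym]
      rwa [this] at ht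
    have hGH1 : (1 - z)ᴴ * uᴴ = 1 := by
      rw [← Matrix.conjTranspose_mul, h2, Matrix.conjTranspose_one]
    have huGH : uᴴ * (1 - z)ᴴ = 1 := by
      rw [← Matrix.conjTranspose_mul, h1, Matrix.conjTranspose_one]
    have hc1 : ∀ X : Matrix (Fin n) (Fin n) ℂ, (1 - z)ᴴ * (uᴴ * X) = X := by
      intro X; rw [← Matrix.mul_assoc, hGH1, Matrix.one_mul]
    have key : Complex.I • ((1 + z) * u) - (Complex.I • ((1 + z) * u))ᴴ
        = (2 * Complex.I) • (uᴴ * ((1 - zᴴ * z) * u)) := by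
      have hWH : (Complex.I • ((1 + z) * u))ᴴ = (-Complex.I) • (uᴴ * (1 + zᴴ)) := by
        rw [Matrix.conjTranspose_smul, Matrix.conjTranspose_mul, Matrix.conjTranspose_add,
          Matrix.conjTranspose_one]
        simp [Complex.star_def, Complex.conj_I]
      have claim : (1 + z) * u + uᴴ * (1 + zᴴ)
          = (2 : ℂ) • (uᴴ * ((1 - zᴴ * z) * u)) := by
        apply left_cancel (isUnit_conjT hu)
        apply right_cancel hu
        have hexp : (1 - z)ᴴ * ((1 + z) * u + uᴴ * (1 + zᴴ)) * (1 - z)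
            = (1 - z)ᴴ * (1 + z) + (1 + zᴴ) * (1 - z) := by
          simp only [Matrix.mul_add, Matrix.add_mul, Matrix.mul_assoc, h2, Matrix.mul_one,
            Matrix.one_mul, hc1]
        have hexp2 : (1 - z)ᴴ * ((2 : ℂ) • (uᴴ * ((1 - zᴴ * z) * u))) * (1 - z)
            = (2 : ℂ) • (1 - zᴴ * z) := by
          simp only [mul_smul_comm, smul_mul_assoc, Matrix.mul_assoc, h2, Matrix.mul_one, hc1]
        rw [hexp, hexp2, Matrix.conjTranspose_sub, Matrix.conjTranspose_one]
        simp only [Matrix.mul_add, Matrix.add_mul, Matrix.mul_sub, Matrix.sub_mul,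
          Matrix.mul_one, Matrix.one_mul]
        module
      rw [hWH, neg_smul, sub_neg_eq_add, ← smul_add, claim, smul_smul]
      congr 1
      ring
    rw [key, smul_smul, inv_mul_cancel₀ h2I, one_smul, ← Matrix.mul_assoc]
    exact posdef_conj hA huu
  · -- (b) inverse map lands in the disk
    intro Z hZ
    obtain ⟨hsym, hpd⟩ := hZ
    have hu : IsUnit (Z + Complex.I • (1 : Matrix (Fin n) (Fin n) ℂ)) :=
      siegel_isUnit ⟨hsym, hpd⟩
    have hd := (Matrix.isUnit_iff_isUnit_det _).mp hu
    set i1 : Matrix (Fin n) (Fin n) ℂ := Complex.I • 1 with hi1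
    set G := Z + i1 with hG
    set v := G⁻¹ with hv
    have h1 : G * v = 1 := Matrix.mul_nonsing_inv _ hd
    have h2 : v * G = 1 := Matrix.nonsing_inv_mul _ hd
    have hcomm : v * (Z - i1) = (Z - i1) * v := by
      apply inv_comm' hu
      rw [hG, hi1]
      simp only [Matrix.add_mul, Matrix.mul_add, Matrix.sub_mul, Matrix.mul_sub,
        smul_mul_assoc, mul_smul_comm, smul_smul, Matrix.one_mul, Matrix.mul_one]
      module
    have hvt : vᵀ = v := by
      rw [hv, Matrix.transpose_nonsing_inv, hG, Matrix.transpose_add, hsym, hi1,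
        Matrix.transpose_smul, Matrix.transpose_one]
    have hwt : ((Z - i1) * v)ᵀ = (Z - i1) * v := by
      rw [Matrix.transpose_mul, hvt, Matrix.transpose_sub, hsym, hi1, Matrix.transpose_smul,
        Matrix.transpose_one, hcomm]
    refine ⟨hwt, ?_⟩
    rw [map_conj_eq_conjT hwt]
    set Yc := (Matrix.of fun i j => (Z i j).im).map Complex.ofRealHom with hYc
    have hYpd : Yc.PosDef := map_posdef hpd
    have hdiff : Z - Zᴴ = (2 * Complex.I) • Yc := sub_conjT_eq hsym
    have hGH : Gᴴ = Zᴴ - i1 := by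
      rw [hG, Matrix.conjTranspose_add, hi1, Matrix.conjTranspose_smul,
        Matrix.conjTranspose_one, Complex.star_def, Complex.conj_I, neg_smul, sub_eq_add_neg]
    have hwH : ((Z - i1) * v)ᴴ = vᴴ * (Zᴴ + i1) := by
      rw [Matrix.conjTranspose_mul, Matrix.conjTranspose_sub, hi1, Matrix.conjTranspose_smul,
        Matrix.conjTranspose_one, Complex.star_def, Complex.conj_I, neg_smul, sub_neg_eq_add]
    have hvGH : vᴴ * Gᴴ = 1 := by
      rw [← Matrix.conjTranspose_mul, h1, Matrix.conjTranspose_one]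
    have hGHvH : Gᴴ * vᴴ = 1 := by
      rw [← Matrix.conjTranspose_mul, h2, Matrix.conjTranspose_one]
    have hca : ∀ X : Matrix (Fin n) (Fin n) ℂ, G * (v * X) = X := by
      intro X; rw [← Matrix.mul_assoc, h1, Matrix.one_mul]
    have hcb : ∀ X : Matrix (Fin n) (Fin n) ℂ, vᴴ * (Gᴴ * X) = X := by
      intro X; rw [← Matrix.mul_assoc, hvGH, Matrix.one_mul]
    have hcommH : (Zᴴ + i1) * Gᴴ = Gᴴ * (Zᴴ + i1) := by
      rw [hGH, hi1]
      simp only [Matrix.add_mul, Matrix.mul_add, Matrix.sub_mul, Matrix.mul_sub,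
        smul_mul_assoc, mul_smul_comm, smul_smul, Matrix.one_mul, Matrix.mul_one]
      module
    have claim : (1 : Matrix (Fin n) (Fin n) ℂ) - (Z - i1) * v * ((Z - i1) * v)ᴴ
        = ((2 : ℂ) • v) * Yc * ((2 : ℂ) • v)ᴴ := by
      apply left_cancel hu
      apply right_cancel (isUnit_conjT hu)
      have eL : G * ((1 : Matrix (Fin n) (Fin n) ℂ) - (Z - i1) * v * ((Z - i1) * v)ᴴ) * Gᴴ
          = G * Gᴴ - (Z - i1) * (Zᴴ + i1) := by
        rw [hwH, ← hcomm]
        simp only [Matrix.mul_sub, Matrix.sub_mul, Matrix.mul_one, Matrix.one_mul,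
          Matrix.mul_assoc, hcommH, hcb, hca]
      have eR : G * (((2 : ℂ) • v) * Yc * ((2 : ℂ) • v)ᴴ) * Gᴴ
          = ((2 : ℂ) * 2) • Yc := by
        rw [Matrix.conjTranspose_smul]
        simp only [smul_mul_assoc, mul_smul_comm, smul_smul, Matrix.mul_assoc, hvGH,
          Matrix.mul_one, hca, Complex.star_def, map_ofNat]
      rw [eL, eR, hGH, hG]
      have expand : (Z + i1) * (Zᴴ - i1) - (Z - i1) * (Zᴴ + i1)
          = ((-2 : ℂ) * Complex.I) • (Z - Zᴴ) := by
        rw [hi1]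
        simp only [Matrix.add_mul, Matrix.mul_add, Matrix.sub_mul, Matrix.mul_sub,
          smul_mul_assoc, mul_smul_comm, smul_smul, Matrix.one_mul, Matrix.mul_one]
        module
      rw [expand, hdiff, smul_smul]
      congr 1
      linear_combination (-4 : ℂ) * Complex.I_sq
    rw [claim]
    have hC : IsUnit ((2 : ℂ) • v) := by
      apply isUnit_of_mul_eq_one' (B := (2⁻¹ : ℂ) • G)
      rw [smul_mul_assoc, mul_smul_comm, smul_smul, h2]
      norm_num
    exact posdef_mul_conj hYpd hC
  · -- (c) left inverse
    intro z hz
    obtain ⟨hsym, hpd⟩ := hz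
    have hu : IsUnit (1 - z) := disk_isUnit ⟨hsym, hpd⟩
    have hd : IsUnit (1 - z).det := (Matrix.isUnit_iff_isUnit_det _).mp hu
    set u := (1 - z)⁻¹ with hu'
    have h1 : (1 - z) * u = 1 := Matrix.mul_nonsing_inv _ hd
    have h2 : u * (1 - z) = 1 := Matrix.nonsing_inv_mul _ hd
    have hinv : (Complex.I • ((1 + z) * u) + Complex.I • (1 : Matrix (Fin n) (Fin n) ℂ))⁻¹
        = (2 * Complex.I)⁻¹ • (1 - z) := by
      apply Matrix.inv_eq_right_inv
      rw [Matrix.add_mul, smul_mul_assoc, smul_mul_assoc, mul_smul_comm, mul_smul_comm,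
        Matrix.mul_assoc, h2, Matrix.mul_one, Matrix.one_mul, smul_smul, smul_smul, hI2I,
        ← smul_add]
      match_scalars <;> ring
    rw [hinv, ← smul_sub, smul_mul_assoc, mul_smul_comm, smul_smul, hI2I]
    have hsubm : (1 + z) * u - (1 - z) * u = (z + z) * u := by
      rw [← Matrix.sub_mul]
      congr 1
      abel
    rw [h1] at hsubm
    rw [hsubm, Matrix.mul_assoc, h2, Matrix.mul_one]
    match_scalars <;> ring
  · -- (d) right inverse
    intro Z hZ
    have hu : IsUnit (Z + Complex.I • (1 : Matrix (Fin n) (Fin n) ℂ)) := siegel_isUnit hZ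
    have hd := (Matrix.isUnit_iff_isUnit_det _).mp hu
    set G := Z + Complex.I • (1 : Matrix (Fin n) (Fin n) ℂ) with hG
    set v := G⁻¹ with hv
    have h1 : G * v = 1 := Matrix.mul_nonsing_inv _ hd
    have h2 : v * G = 1 := Matrix.nonsing_inv_mul _ hd
    have hsub : G * v - (Z - Complex.I • (1 : Matrix (Fin n) (Fin n) ℂ)) * v
        = ((2 * Complex.I) • (1 : Matrix (Fin n) (Fin n) ℂ)) * v := by
      rw [← Matrix.sub_mul]
      congr 1
      rw [hG]
      module
    rw [h1] at hsub
    have hinv : (1 - (Z - Complex.I • (1 : Matrix (Fin n) (Fin n) ℂ)) * v)⁻¹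
        = (2 * Complex.I)⁻¹ • G := by
      apply Matrix.inv_eq_right_inv
      rw [hsub, smul_mul_assoc, Matrix.one_mul, smul_mul_assoc, mul_smul_comm, h2, smul_smul,
        mul_inv_cancel₀ h2I, one_smul]
    have hadd : G * v + (Z - Complex.I • (1 : Matrix (Fin n) (Fin n) ℂ)) * v = (Z + Z) * v := by
      rw [← Matrix.add_mul]
      congr 1
      rw [hG]
      module
    rw [h1] at hadd
    rw [hinv, hadd, mul_smul_comm, Matrix.mul_assoc, h2, Matrix.mul_one, smul_smul, hI2I]
    match_scalars <;> ring
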